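/- Generalized Gronwall lemma with singular kernel: let f : (0,T] → [0,∞) be bounded measurable, a ∈ [0, 1) and C > 0, and suppose f(t) ≤ C ∫₀^t (s^{−a} + 1) f(s) ds for all t ∈ (0,T]. Then f(t) = 0 for all t ∈ (0,T]. -/

import Mathlib

open Real MeasureTheory

theorem gronwall_singular_kernel (T a C : ℝ) (hT : 0 < T)
    (ha : a ∈ Set.Ico (0 : ℝ) 1) (hC : 0 < C)
    (f : ℝ → ℝ) (hfnn : ∀ t ∈ Set.Ioc (0 : ℝ) T, 0 ≤ f t)
    (hmeas : Measurable f) (hbdf : ∃ B : ℝ, ∀ t ∈ Set.Ioc (0 : ℝ) T, f t ≤ B)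
    (hineq : ∀ t ∈ Set.Ioc (0 : ℝ) T,
      f t ≤ C * ∫ s in (0 : ℝ)..t, (s ^ (-a) + 1) * f s) :
    ∀ t ∈ Set.Ioc (0 : ℝ) T, f t = 0 := by
  obtain ⟨ha0, ha1⟩ := ha
  obtain ⟨B, hB⟩ := hbdf
  have hB0 : 0 ≤ B := le_trans (hfnn T ⟨hT, le_refl T⟩) (hB T ⟨hT, le_refl T⟩)
  have hb : (0:ℝ) < 1 - a := by linarith
  set Φ : ℝ → ℝ := fun s => s ^ (1 - a) / (1 - a) + s with hΦdef
  have hΦ0 : Φ 0 = 0 := by simp [hΦdef, Real.zero_rpow hb.ne']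
  have hΦnn : ∀ s : ℝ, 0 ≤ s → 0 ≤ Φ s := by
    intro s hs
    have h1 : (0:ℝ) ≤ s ^ (1 - a) := Real.rpow_nonneg hs _
    have : (0:ℝ) ≤ s ^ (1 - a) / (1 - a) := div_nonneg h1 hb.le
    simpa [hΦdef] using add_nonneg this hs
  have hΦmono : ∀ s t : ℝ, 0 ≤ s → s ≤ t → Φ s ≤ Φ t := by
    intro s t hs hst
    have h1 : s ^ (1 - a) ≤ t ^ (1 - a) := Real.rpow_le_rpow hs hst hb.le
    have h2 : s ^ (1 - a) / (1 - a) ≤ t ^ (1 - a) / (1 - a) := by gcongr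
    simpa [hΦdef] using add_le_add h2 hst
  -- kernel positivity
  have hkpos : ∀ s : ℝ, 0 < s → 0 ≤ s ^ (-a) + 1 := by
    intro s hs
    have : (0:ℝ) ≤ s ^ (-a) := Real.rpow_nonneg hs.le _
    linarith
  -- kernel integrability
  have hker : ∀ t : ℝ, 0 < t → IntegrableOn (fun s => s ^ (-a) + 1) (Set.Ioc 0 t) := by
    intro t ht
    have h1 : IntervalIntegrable (fun s : ℝ => s ^ (-a)) volume 0 t :=
      intervalIntegral.intervalIntegrable_rpow' (by linarith)
    exact (h1.add (intervalIntegrable_const (c := (1:ℝ)))).1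
  -- continuity of Φ on [0,t]
  have hcontΦ : ∀ t : ℝ, ContinuousOn Φ (Set.Icc 0 t) := by
    intro t
    apply ContinuousOn.add _ continuousOn_id
    apply ContinuousOn.div_const
    intro x _
    exact (Real.continuousAt_rpow_const x _ (Or.inr hb.le)).continuousWithinAt
  -- FTC computation
  have hFTC : ∀ t : ℝ, 0 < t → ∀ n : ℕ,
      ∫ s in (0:ℝ)..t, (s ^ (-a) + 1) * Φ s ^ n = Φ t ^ (n+1) / (n+1) := by
    intro t ht n
    set G : ℝ → ℝ := fun s => Φ s ^ (n+1) / (n+1) with hGdef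
    have hcontG : ContinuousOn G (Set.Icc 0 t) := (( (hcontΦ t).pow _).div_const _)
    have hderiv : ∀ x ∈ Set.Ioo (0:ℝ) t,
        HasDerivWithinAt G ((x ^ (-a) + 1) * Φ x ^ n) (Set.Ioi x) x := by
      intro x hx
      have hx0 : x ≠ 0 := ne_of_gt hx.1
      have hΦ' : HasDerivAt Φ (x ^ (-a) + 1) x := by
        have h1 : HasDerivAt (fun s : ℝ => s ^ (1 - a)) ((1-a) * x ^ (1-a-1)) x :=
          Real.hasDerivAt_rpow_const (Or.inl hx0)
        have h2 := (h1.div_const (1-a)).add (hasDerivAt_id x)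
        have he : (1-a) * x ^ (1-a-1) / (1-a) + 1 = x ^ (-a) + 1 := by
          rw [show (1-a-1) = -a by ring]
          field_simp
        rw [he] at h2
        exact h2
      have h3 := (hΦ'.pow (n+1)).div_const (n+1)
      have he2 : (↑(n+1) * Φ x ^ (n+1-1) * (x ^ (-a) + 1)) / (n+1)
          = (x ^ (-a) + 1) * Φ x ^ n := by
        have hn : ((n:ℝ)+1) ≠ 0 := by positivity
        push_cast
        field_simp
      rw [he2] at h3
      exact h3.hasDerivWithinAt
    have hint : IntervalIntegrable (fun s => (s ^ (-a) + 1) * Φ s ^ n) volume 0 t := by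
      rw [intervalIntegrable_iff_integrableOn_Ioc_of_le ht.le]
      apply Integrable.mono' ((hker t ht).mul_const (Φ t ^ n))
      · exact Measurable.aestronglyMeasurable (by fun_prop)
      · filter_upwards [ae_restrict_mem measurableSet_Ioc] with s hs
        have hs0 : 0 < s := hs.1
        have h1 : 0 ≤ Φ s ^ n := pow_nonneg (hΦnn s hs0.le) n
        have h2 : Φ s ^ n ≤ Φ t ^ n :=
          pow_le_pow_left₀ (hΦnn s hs0.le) (hΦmono s t hs0.le hs.2) n
        rw [Real.norm_eq_abs, abs_of_nonneg (mul_nonneg (hkpos s hs0) h1)]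
        exact mul_le_mul_of_nonneg_left h2 (hkpos s hs0)
    have := intervalIntegral.integral_eq_sub_of_hasDeriv_right_of_le ht.le hcontG hderiv hint
    rw [this, hGdef]
    simp [hΦ0, Real.zero_rpow hb.ne']
  -- induction bound
  have hmain : ∀ n : ℕ, ∀ t ∈ Set.Ioc (0:ℝ) T, f t ≤ B * (C * Φ t) ^ n / n.factorial := by
    intro n
    induction n with
    | zero => intro t ht; simpa using hB t ht
    | succ n ih =>
      intro t ht
      have ht0 : 0 < t := ht.1
      have key : ∫ s in (0:ℝ)..t, (s ^ (-a) + 1) * f s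
          ≤ ∫ s in (0:ℝ)..t, (s ^ (-a) + 1) * (B * (C * Φ s) ^ n / n.factorial) := by
        rw [intervalIntegral.integral_of_le ht0.le, intervalIntegral.integral_of_le ht0.le]
        have hint1 : IntegrableOn (fun s => (s ^ (-a) + 1) * f s) (Set.Ioc 0 t) := by
          apply Integrable.mono' ((hker t ht0).mul_const B)
          · exact Measurable.aestronglyMeasurable (by fun_prop)
          · filter_upwards [ae_restrict_mem measurableSet_Ioc] with s hs
            have hs' : s ∈ Set.Ioc (0:ℝ) T := ⟨hs.1, hs.2.trans ht.2⟩
            rw [Real.norm_eq_abs, abs_of_nonneg (mul_nonneg (hkpos s hs.1) (hfnn s hs'))]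
            exact mul_le_mul_of_nonneg_left (hB s hs') (hkpos s hs.1)
        have hint2 : IntegrableOn
            (fun s => (s ^ (-a) + 1) * (B * (C * Φ s) ^ n / n.factorial)) (Set.Ioc 0 t) := by
          apply Integrable.mono' ((hker t ht0).mul_const (B * (C * Φ t) ^ n / n.factorial))
          · exact Measurable.aestronglyMeasurable (by fun_prop)
          · filter_upwards [ae_restrict_mem measurableSet_Ioc] with s hs
            have hs0 : 0 < s := hs.1
            have hΦs : 0 ≤ Φ s := hΦnn s hs0.le
            have h2 : (C * Φ s) ^ n ≤ (C * Φ t) ^ n :=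
              pow_le_pow_left₀ (mul_nonneg hC.le hΦs)
                (mul_le_mul_of_nonneg_left (hΦmono s t hs0.le hs.2) hC.le) n
            have hval : 0 ≤ B * (C * Φ s) ^ n / n.factorial := by positivity
            rw [Real.norm_eq_abs, abs_of_nonneg (mul_nonneg (hkpos s hs0) hval)]
            have hdiv : B * (C * Φ s) ^ n / n.factorial
                ≤ B * (C * Φ t) ^ n / n.factorial := by gcongr
            exact mul_le_mul_of_nonneg_left hdiv (hkpos s hs0)
        refine setIntegral_mono_on hint1 hint2 measurableSet_Ioc ?_
        intro s hs
        have hs' : s ∈ Set.Ioc (0:ℝ) T := ⟨hs.1, hs.2.trans ht.2⟩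
        exact mul_le_mul_of_nonneg_left (ih s hs') (hkpos s hs.1)
      have hconst : ∫ s in (0:ℝ)..t, (s ^ (-a) + 1) * (B * (C * Φ s) ^ n / n.factorial)
          = (B * C ^ n / n.factorial) * (Φ t ^ (n+1) / (n+1)) := by
        have : ∀ s : ℝ, (s ^ (-a) + 1) * (B * (C * Φ s) ^ n / n.factorial)
            = (B * C ^ n / n.factorial) * ((s ^ (-a) + 1) * Φ s ^ n) := by
          intro s; rw [mul_pow]; ring
        simp_rw [this]
        rw [intervalIntegral.integral_const_mul, hFTC t ht0 n]
      calc f t ≤ C * ∫ s in (0:ℝ)..t, (s ^ (-a) + 1) * f s := hineq t ht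
        _ ≤ C * ((B * C ^ n / n.factorial) * (Φ t ^ (n+1) / (n+1))) := by
            rw [← hconst]; exact mul_le_mul_of_nonneg_left key hC.le
        _ = B * (C * Φ t) ^ (n+1) / (n+1).factorial := by
            rw [mul_pow, Nat.factorial_succ]
            push_cast
            have h1 : ((n:ℝ)+1) ≠ 0 := by positivity
            have h2 : (n.factorial : ℝ) ≠ 0 := by positivity
            field_simp
            ring
  -- conclusion
  intro t ht
  refine le_antisymm ?_ (hfnn t ht)
  have hΦt : 0 ≤ Φ t := hΦnn t ht.1.le
  have hlim : Filter.Tendsto (fun n : ℕ => B * (C * Φ t) ^ n / n.factorial)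
      Filter.atTop (nhds 0) := by
    have := (FloorSemiring.tendsto_pow_div_factorial_atTop (C * Φ t)).const_mul B
    simpa [mul_div_assoc] using this
  apply ge_of_tendsto hlim
  filter_upwards with n
  exact hmain n t ht
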